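/- With p₀(ε) = ∏ᵢ(ε − λᵢ) of degree n and pᵢⱼ as defined (delete i-th factor, shift the first i−1 factors by j), the polynomials p_{1j}, ..., p_{nj} span the n-dimensional space of polynomials of degree ≤ n−1 over ℂ. -/

import Mathlib

open Polynomial Finset

theorem deleted_shifted_products_span (n : ℕ) (lam : Fin n → ℂ)
    (horder : ∀ i k : Fin n, i < k → ∀ m : ℤ, lam k - lam i = (m : ℂ) → 0 ≤ m)
    (j : ℕ) (hj : 0 < j) :
    Submodule.span ℂ (Set.range (fun i : Fin n =>
      (∏ l ∈ univ.filter (fun l => l < i), (X - C (lam l) + C (j : ℂ))) *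
      ∏ l ∈ univ.filter (fun l => i < l), (X - C (lam l)))) = degreeLT ℂ n := by
  classical
  set P : Fin n → ℂ[X] := fun i : Fin n =>
      (∏ l ∈ univ.filter (fun l => l < i), (X - C (lam l) + C (j : ℂ))) *
      ∏ l ∈ univ.filter (fun l => i < l), (X - C (lam l)) with hP
  set S := Submodule.span ℂ (Set.range P) with hS
  set A : ℕ → ℂ[X] := fun a =>
      ∏ l ∈ univ.filter (fun l : Fin n => (l : ℕ) < a), (X - C (lam l) + C (j : ℂ)) with hA
  set B : ℕ → ℂ[X] := fun b =>
      ∏ l ∈ univ.filter (fun l : Fin n => b ≤ (l : ℕ)), (X - C (lam l)) with hB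
  -- the generators in terms of A and B
  have hPAB : ∀ i : Fin n, P i = A i * B (i + 1) := by
    intro i
    have h1 : (univ.filter fun l : Fin n => l < i) =
        (univ.filter fun l : Fin n => (l : ℕ) < (i : ℕ)) := rfl
    have h2 : (univ.filter fun l : Fin n => i < l) =
        (univ.filter fun l : Fin n => (i : ℕ) + 1 ≤ (l : ℕ)) := by
      apply filter_congr; intro l _; exact Nat.succ_le.symm
    simp only [hP, hA, hB]
    rw [h1, h2]
  -- recurrences
  have hAsucc : ∀ a (ha : a < n),
      A (a + 1) = A a * (X - C (lam ⟨a, ha⟩) + C (j : ℂ)) := by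
    intro a ha
    have h : (univ.filter fun l : Fin n => (l : ℕ) < a + 1) =
        insert ⟨a, ha⟩ (univ.filter fun l : Fin n => (l : ℕ) < a) := by
      ext l
      simp only [mem_filter, mem_univ, true_and, mem_insert, Fin.ext_iff]
      omega
    rw [hA]
    simp only
    rw [h, prod_insert (by simp), mul_comm]
  have hBsucc : ∀ b (hb : b < n),
      B b = (X - C (lam ⟨b, hb⟩)) * B (b + 1) := by
    intro b hb
    have h : (univ.filter fun l : Fin n => b ≤ (l : ℕ)) =
        insert ⟨b, hb⟩ (univ.filter fun l : Fin n => b + 1 ≤ (l : ℕ)) := by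
      ext l
      simp only [mem_filter, mem_univ, true_and, mem_insert, Fin.ext_iff]
      omega
    rw [hB]
    simp only
    rw [h, prod_insert (by simp)]
  -- key telescoping identity
  have key : ∀ a b (hab : a ≤ b) (hb : b < n),
      A a * B b - A (a + 1) * B (b + 1) =
        C (lam ⟨a, lt_of_le_of_lt hab hb⟩ - lam ⟨b, hb⟩ - (j : ℂ)) * (A a * B (b + 1)) := by
    intro a b hab hb
    rw [hBsucc b hb, hAsucc a (lt_of_le_of_lt hab hb), map_sub, map_sub]
    ring
  -- the scalar is nonzero
  have hc : ∀ a b (hab : a ≤ b) (hb : b < n),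
      lam ⟨a, lt_of_le_of_lt hab hb⟩ - lam ⟨b, hb⟩ - (j : ℂ) ≠ 0 := by
    intro a b hab hb h
    rcases eq_or_lt_of_le hab with rfl | hlt
    · have : ((j : ℤ) : ℂ) = 0 := by push_cast; linear_combination -h
      have : (j : ℤ) = 0 := by exact_mod_cast this
      omega
    · have hdiff : lam ⟨b, hb⟩ - lam ⟨a, lt_of_le_of_lt hab hb⟩ = ((-(j : ℤ) : ℤ) : ℂ) := by
        push_cast; linear_combination -h
      have := horder ⟨a, lt_of_le_of_lt hab hb⟩ ⟨b, hb⟩ hlt (-(j : ℤ)) hdiff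
      omega
  -- all truncated products lie in the span
  have main : ∀ d a, a + (d + 1) ≤ n → A a * B (a + d + 1) ∈ S := by
    intro d
    induction d with
    | zero =>
      intro a ha
      have : A a * B (a + 0 + 1) = P ⟨a, by omega⟩ := by
        rw [hPAB ⟨a, by omega⟩]
      rw [this]
      exact Submodule.subset_span ⟨⟨a, by omega⟩, rfl⟩
    | succ d ih =>
      intro a ha
      have hb : a + d + 1 < n := by omega
      have hab : a ≤ a + d + 1 := by omega
      have h1 : A a * B (a + d + 1) ∈ S := ih a (by omega)
      have h2 : A (a + 1) * B (a + d + 2) ∈ S := by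
        have := ih (a + 1) (by omega)
        convert this using 3; omega
      have hsub : A a * B (a + d + 1) - A (a + 1) * B (a + d + 2) ∈ S := S.sub_mem h1 h2
      set c := lam ⟨a, lt_of_le_of_lt hab hb⟩ - lam ⟨a + d + 1, hb⟩ - (j : ℂ) with hcdef
      have hc0 : c ≠ 0 := hc a (a + d + 1) hab hb
      have heq : A a * B (a + d + 1 + 1) =
          c⁻¹ • (A a * B (a + d + 1) - A (a + 1) * B (a + d + 1 + 1)) := by
        rw [key a (a + d + 1) hab hb, smul_eq_C_mul, ← mul_assoc, ← C_mul,
          inv_mul_cancel₀ hc0, C_1, one_mul]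
      have : A a * B (a + d + 1 + 1) ∈ S := by
        rw [heq]
        exact S.smul_mem _ hsub
      convert this using 3; omega
  -- B n = 1, hence A a ∈ S for a < n
  have hBn : B n = 1 := by
    rw [hB]
    simp only
    rw [filter_false_of_mem, prod_empty]
    intro l _
    simp only [not_le]
    exact l.isLt
  have hAmem : ∀ a, a < n → A a ∈ S := by
    intro a ha
    have := main (n - a - 1) a (by omega)
    rw [show a + (n - a - 1) + 1 = n by omega, hBn, mul_one] at this
    exact this
  -- A a is monic of natDegree a
  have hfac : ∀ l : Fin n, X - C (lam l) + C (j : ℂ) = X + C ((j : ℂ) - lam l) := by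
    intro l; rw [map_sub]; ring
  have hAmonic : ∀ a, (A a).Monic := by
    intro a
    apply monic_prod_of_monic
    intro l _
    rw [hfac l]
    exact monic_X_add_C _
  have hBmonic : ∀ b, (B b).Monic := by
    intro b
    apply monic_prod_of_monic
    intro l _
    exact monic_X_sub_C _
  have hAdeg : ∀ a (ha : a < n), (A a).natDegree = a := by
    intro a ha
    rw [hA]
    simp only
    rw [natDegree_prod_of_monic _ _ (fun l _ => by rw [hfac l]; exact monic_X_add_C _)]
    have h : (univ.filter fun l : Fin n => (l : ℕ) < a) = Finset.Iio ⟨a, ha⟩ := by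
      ext l; simp [Fin.lt_def]
    have h2 : ∀ l : Fin n, (X - C (lam l) + C (j : ℂ)).natDegree = 1 := by
      intro l; rw [hfac l]; exact natDegree_X_add_C _
    rw [sum_congr rfl fun l _ => h2 l, sum_const, smul_eq_mul, mul_one, h, Fin.card_Iio]
  have hBdeg : ∀ i : Fin n, (B ((i : ℕ) + 1)).natDegree = n - 1 - (i : ℕ) := by
    intro i
    rw [hB]
    simp only
    rw [natDegree_prod_of_monic _ _ (fun l _ => monic_X_sub_C _)]
    have h : (univ.filter fun l : Fin n => (i : ℕ) + 1 ≤ (l : ℕ)) = Finset.Ioi i := by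
      ext l
      simp only [mem_filter, mem_univ, true_and, mem_Ioi, Fin.lt_def]
      omega
    rw [sum_congr rfl (fun l _ => natDegree_X_sub_C _), sum_const,
      smul_eq_mul, mul_one, h, Fin.card_Ioi]
  -- span ≤ degreeLT n
  have hle : S ≤ degreeLT ℂ n := by
    rw [hS, Submodule.span_le]
    rintro _ ⟨i, rfl⟩
    have hmonic : (P i).Monic := by
      rw [hPAB i]; exact (hAmonic _).mul (hBmonic _)
    have hdeg : (P i).natDegree < n := by
      rw [hPAB i, (hAmonic _).natDegree_mul (hBmonic _), hAdeg i i.isLt, hBdeg i]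
      have := i.isLt
      omega
    simp only [SetLike.mem_coe]
    rw [mem_degreeLT]
    exact lt_of_le_of_lt degree_le_natDegree (by exact_mod_cast hdeg)
  -- degreeLT n ≤ span
  have hge : ∀ k, k ≤ n → degreeLT ℂ k ≤ S := by
    intro k
    induction k with
    | zero =>
      intro _ f hf
      rw [mem_degreeLT] at hf
      have h0 : f.degree < 0 := by exact_mod_cast hf
      have : f = 0 := degree_eq_bot.mp (Nat.WithBot.lt_zero_iff.mp h0)
      rw [this]; exact S.zero_mem
    | succ k ih =>
      intro hk f hf
      rw [mem_degreeLT] at hf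
      set c := f.coeff k with hcdef
      have hAk := hAmem k (by omega)
      have hg : f - C c * A k ∈ degreeLT ℂ k := by
        rw [mem_degreeLT, degree_lt_iff_coeff_zero]
        intro m hm
        rw [coeff_sub, coeff_C_mul]
        have hm' : k ≤ m := by exact_mod_cast hm
        rcases eq_or_lt_of_le hm' with rfl | hlt
        · have h1 : (A k).coeff k = 1 := by
            have h2 := (hAmonic k).coeff_natDegree
            rwa [hAdeg k (by omega)] at h2
          rw [h1, mul_one, hcdef, sub_self]
        · have h1 : f.coeff m = 0 := by
            apply coeff_eq_zero_of_degree_lt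
            exact lt_of_lt_of_le hf (by exact_mod_cast hlt)
          have h2 : (A k).coeff m = 0 := by
            apply coeff_eq_zero_of_natDegree_lt
            rw [hAdeg k (by omega)]
            exact hlt
          rw [h1, h2, mul_zero, sub_zero]
      have : f = (f - C c * A k) + c • A k := by
        rw [smul_eq_C_mul]; ring
      rw [this]
      exact S.add_mem (ih (by omega) hg) (S.smul_mem c hAk)
  exact le_antisymm hle (hge n le_rfl)
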